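/- Let Ω₂ = {(w,z) ∈ ℂ² : Re w + z² + z̄² + |z|⁴ < 0}, p = (-1,0), ψ(w,z) = (w − 2z², z), φⱼ(w,z) = (w/j⁴, z/j), and φ̃ⱼ := ψ ∘ φⱼ ∘ ψ⁻¹. Then the Frankel scaling map with respect to (p, φ̃ⱼ) is ωⱼ(w,z) = (w + 2(1−j²)z² + 1, z), and every subsequence of {ωⱼ} diverges (fails to converge uniformly on any nonempty open subset of Ω₂). -/

import Mathlib

open Complex Filter

/-- On `Ω₂ = {Re w + z² + z̄² + |z|⁴ < 0}` with `p = (-1,0)`,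
`ψ(w,z) = (w − 2z², z)`, `φⱼ(w,z) = (w/j⁴, z/j)` and `φ̃ⱼ = ψ ∘ φⱼ ∘ ψ⁻¹`, the Frankel
scaling map with respect to `(p, φ̃ⱼ)` is `ωⱼ(w,z) = (w + 2(1−j²)z² + 1, z)` (encoded via
`dφ̃ⱼ|ₚ (ωⱼ q) = φ̃ⱼ q − φ̃ⱼ p`), and every subsequence of `{ωⱼ}` fails to converge
uniformly on any nonempty open subset of `Ω₂`. -/
theorem frankel_stmt3
    (ψ : ℂ × ℂ → ℂ × ℂ) (hψ : ∀ p : ℂ × ℂ, ψ p = (p.1 - 2 * p.2 ^ 2, p.2))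
    (ψinv : ℂ × ℂ → ℂ × ℂ) (hψinv : ∀ p : ℂ × ℂ, ψinv p = (p.1 + 2 * p.2 ^ 2, p.2))
    (φ : ℕ → ℂ × ℂ → ℂ × ℂ)
    (hφ : ∀ j, ∀ p : ℂ × ℂ, φ j p = (p.1 / (j : ℂ) ^ 4, p.2 / (j : ℂ)))
    (ω : ℕ → ℂ × ℂ → ℂ × ℂ)
    (hω : ∀ j, ∀ p : ℂ × ℂ, ω j p = (p.1 + 2 * (1 - (j : ℂ) ^ 2) * p.2 ^ 2 + 1, p.2)) :
    (∀ j : ℕ, 0 < j → ∀ q : ℂ × ℂ,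
        fderiv ℂ (ψ ∘ φ j ∘ ψinv) ((-1 : ℂ), (0 : ℂ)) (ω j q)
          = (ψ ∘ φ j ∘ ψinv) q - (ψ ∘ φ j ∘ ψinv) ((-1 : ℂ), (0 : ℂ))) ∧
    (∀ s : ℕ → ℕ, StrictMono s →
      ∀ U : Set (ℂ × ℂ),
        U ⊆ {p : ℂ × ℂ | p.1.re + (p.2 ^ 2 + (starRingEnd ℂ p.2) ^ 2).re + ‖p.2‖ ^ 4 < 0} →
        IsOpen U → U.Nonempty →
        ¬ ∃ g : ℂ × ℂ → ℂ × ℂ, TendstoUniformlyOn (fun n => ω (s n)) g atTop U) := by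
  constructor
  · -- Part 1: the defining identity of the Frankel scaling map
    intro j hj q
    have hj' : ((j:ℂ)) ≠ 0 := Nat.cast_ne_zero.mpr hj.ne'
    set c : ℂ := (j:ℂ) with hc
    have hF : (ψ ∘ φ j ∘ ψinv) = fun p : ℂ × ℂ =>
        ((p.1 + 2*(p.2*p.2))*(c^4)⁻¹ - 2*((p.2*c⁻¹)*(p.2*c⁻¹)), p.2*c⁻¹) := by
      funext p
      simp only [Function.comp_apply, hψinv, hφ, hψ]
      simp only [Prod.mk.injEq]
      constructor
      · simp only [← hc]; field_simp
      · simp only [← hc]; field_simp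
    rw [hF, hω]
    have h1 := (((hasFDerivAt_fst (𝕜 := ℂ) (p := ((-1:ℂ),(0:ℂ)))).add
        (((hasFDerivAt_snd (𝕜 := ℂ) (p := ((-1:ℂ),(0:ℂ)))).mul (hasFDerivAt_snd (𝕜 := ℂ))).const_mul 2)).mul_const ((c^4)⁻¹)).sub
        ((((hasFDerivAt_snd (𝕜 := ℂ) (p := ((-1:ℂ),(0:ℂ)))).mul_const c⁻¹).mul ((hasFDerivAt_snd (𝕜 := ℂ)).mul_const c⁻¹)).const_mul 2)
    have h2 := (hasFDerivAt_snd (𝕜 := ℂ) (p := ((-1:ℂ),(0:ℂ)))).mul_const c⁻¹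
    have H := h1.prodMk h2
    rw [HasFDerivAt.fderiv (f := fun p : ℂ × ℂ => ((p.1 + 2 * (p.2 * p.2)) * (c ^ 4)⁻¹ - 2 * (p.2 * c⁻¹ * (p.2 * c⁻¹)), p.2 * c⁻¹)) H]
    simp
    field_simp
    simp only [← hc, and_true]; ring
  · -- Part 2: divergence of every subsequence
    intro s hs U _ hUopen hUne
    rintro ⟨g, hg⟩
    obtain ⟨p₀, hp₀⟩ := hUne
    obtain ⟨q, hqU, hq2⟩ : ∃ q ∈ U, q.2 ≠ 0 := by
      by_cases h : p₀.2 = 0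
      · obtain ⟨ε, hε, hball⟩ := Metric.isOpen_iff.mp hUopen p₀ hp₀
        refine ⟨(p₀.1, p₀.2 + (ε/2 : ℝ)), hball ?_, ?_⟩
        · rw [Metric.mem_ball]
          have : dist ((p₀.1, p₀.2 + (ε/2:ℝ)) : ℂ × ℂ) p₀ = ε / 2 := by
            simp [Prod.dist_eq, Complex.dist_eq]
            rw [abs_of_pos (by linarith)]
            exact sup_eq_right.mpr (by linarith)
          rw [this]; linarith
        · simp only [h, zero_add]
          simp only [ne_eq, ofReal_eq_zero]
          positivity
      · exact ⟨p₀, hp₀, h⟩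
    have hlim : Tendsto (fun n => (ω (s n) q).1) atTop (nhds ((g q).1)) :=
      (continuous_fst.tendsto _).comp (hg.tendsto_at hqU)
    have hnorm : Tendsto (fun n => ‖(ω (s n) q).1‖) atTop (nhds ‖(g q).1‖) := hlim.norm
    have hq : (0:ℝ) < ‖q.2‖ := norm_pos_iff.mpr hq2
    have htop : Tendsto (fun n => ‖(ω (s n) q).1‖) atTop atTop := by
      have hbnd : (fun n : ℕ => 2*((n:ℝ)^2 - 1)*‖q.2‖^2 - ‖q.1 + 1‖) ≤ᶠ[atTop]
          (fun n => ‖(ω (s n) q).1‖) := by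
        filter_upwards [eventually_ge_atTop 1] with n hn
        have hsn : (n:ℝ) ≤ (s n : ℝ) := by exact_mod_cast hs.le_apply
        have hn1 : (1:ℝ) ≤ (n:ℝ) := by exact_mod_cast hn
        have key : ‖(ω (s n) q).1‖ ≥ ‖2 * (1 - ((s n):ℂ)^2) * q.2^2‖ - ‖q.1 + 1‖ := by
          rw [hω]
          have heq : ((q.1 + 2 * (1 - ((s n):ℂ) ^ 2) * q.2 ^ 2 + 1, q.2) : ℂ × ℂ).1
              = 2 * (1 - ((s n):ℂ) ^ 2) * q.2 ^ 2 - (-(q.1 + 1)) := by simp; ring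
          rw [heq]
          have := norm_sub_norm_le (2 * (1 - ((s n):ℂ) ^ 2) * q.2 ^ 2) (-(q.1 + 1))
          rw [norm_neg] at this
          exact this
        have hnormval : ‖2 * (1 - ((s n):ℂ)^2) * q.2^2‖ = 2 * |1 - ((s n):ℝ)^2| * ‖q.2‖^2 := by
          rw [norm_mul, norm_mul]
          have h5 : (1 - ((s n):ℂ)^2) = (((1 - ((s n):ℝ)^2 : ℝ)) : ℂ) := by push_cast; ring
          rw [h5, norm_pow]
          norm_num [Complex.norm_real]
          exact Or.inl (by rw [h5]; exact Complex.norm_real _)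
        have habs : |1 - ((s n):ℝ)^2| ≥ (n:ℝ)^2 - 1 := by
          have h1 : ((s n):ℝ)^2 ≥ (n:ℝ)^2 := by nlinarith
          rw [abs_sub_comm, _root_.abs_of_nonneg (by nlinarith)]
          linarith
        have : 2*((n:ℝ)^2 - 1)*‖q.2‖^2 ≤ ‖2 * (1 - ((s n):ℂ)^2) * q.2^2‖ := by
          rw [hnormval]
          nlinarith [sq_nonneg ‖q.2‖]
        linarith
      refine tendsto_atTop_mono' atTop hbnd ?_
      have h1 : Tendsto (fun n : ℕ => (n:ℝ)^2) atTop atTop :=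
          (tendsto_pow_atTop (by norm_num)).comp tendsto_natCast_atTop_atTop
      have h2 : Tendsto (fun n : ℕ => ((n:ℝ)^2 - 1)) atTop atTop := by
        have := tendsto_atTop_add_const_right atTop (-1 : ℝ) h1
        exact this.congr (fun n => by ring)
      have h3 := h2.atTop_mul_const (r := 2*‖q.2‖^2) (by positivity)
      have h4 := tendsto_atTop_add_const_right atTop (-‖q.1 + 1‖) h3
      exact h4.congr (fun n => by ring)
    exact not_tendsto_atTop_of_tendsto_nhds hnorm htop
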